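/- arXiv:1711.03887 — 2 statements merged into one kernel-verified Lean document; each statement's English description precedes it below -/
import Mathlib

section
/- For all nonnegative integers x, y bounded by M = 2^m, |x - y| = Σ_{i=0}^{m} 2^i · η(⌊x/2^i⌋, ⌊y/2^i⌋), where η(u,v) = [u odd ∧ v even ∧ u ≥ v] - [u even ∧ v odd ∧ u ≥ v] + [v odd ∧ u even ∧ v ≥ u] - [v even ∧ u odd ∧ v ≥ u]. -/
private lemma div_pow_succ (x : ℤ) (hx : 0 ≤ x) (i : ℕ) :
    x / 2 ^ (i + 1) = (x / 2) / 2 ^ i := by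
  obtain ⟨n, rfl⟩ := Int.eq_ofNat_of_zero_le hx
  rw [show ((2:ℤ)^(i+1)) = ((2^(i+1) : ℕ) : ℤ) by push_cast; ring,
      show ((2:ℤ)^i) = ((2^i : ℕ) : ℤ) by push_cast; ring,
      show ((2:ℤ)) = ((2 : ℕ) : ℤ) by norm_num,
      ← Int.natCast_div, ← Int.natCast_div, ← Int.natCast_div,
      Nat.div_div_eq_div_mul, ← pow_succ']

private def eta (u v : ℤ) : ℤ :=
  (if Odd u ∧ Even v ∧ v ≤ u then (1 : ℤ) else 0)
    - (if Even u ∧ Odd v ∧ v ≤ u then (1 : ℤ) else 0)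
    + (if Odd v ∧ Even u ∧ u ≤ v then (1 : ℤ) else 0)
    - (if Even v ∧ Odd u ∧ u ≤ v then (1 : ℤ) else 0)

private lemma key (x y : ℤ) : |x - y| = eta x y + 2 * |x / 2 - y / 2| := by
  unfold eta
  rcases abs_cases (x - y) with ⟨h1, h2⟩ | ⟨h1, h2⟩ <;>
  rcases abs_cases (x / 2 - y / 2) with ⟨h3, h4⟩ | ⟨h3, h4⟩ <;>
  rw [h1, h3] <;>
  simp only [Int.odd_iff, Int.even_iff] <;>
  split_ifs <;> omega

theorem abs_sub_unwind (m : ℕ) (x y : ℤ) (hx : 0 ≤ x) (hy : 0 ≤ y)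
    (hxM : x < 2 ^ m) (hyM : y < 2 ^ m) :
    |x - y| = ∑ i ∈ Finset.range (m + 1), (2 : ℤ) ^ i *
      (let u := x / 2 ^ i; let v := y / 2 ^ i;
        (if Odd u ∧ Even v ∧ v ≤ u then (1 : ℤ) else 0)
        - (if Even u ∧ Odd v ∧ v ≤ u then (1 : ℤ) else 0)
        + (if Odd v ∧ Even u ∧ u ≤ v then (1 : ℤ) else 0)
        - (if Even v ∧ Odd u ∧ u ≤ v then (1 : ℤ) else 0)) := by
  have hsum : ∀ (n : ℕ) (a b : ℤ),
      (∑ i ∈ Finset.range (n + 1), (2 : ℤ) ^ i *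
        (let u := a / 2 ^ i; let v := b / 2 ^ i;
          (if Odd u ∧ Even v ∧ v ≤ u then (1 : ℤ) else 0)
          - (if Even u ∧ Odd v ∧ v ≤ u then (1 : ℤ) else 0)
          + (if Odd v ∧ Even u ∧ u ≤ v then (1 : ℤ) else 0)
          - (if Even v ∧ Odd u ∧ u ≤ v then (1 : ℤ) else 0)))
      = ∑ i ∈ Finset.range (n + 1), (2 : ℤ) ^ i * eta (a / 2 ^ i) (b / 2 ^ i) := by
    intro n a b; rfl
  rw [hsum]
  clear hsum
  induction m generalizing x y with
  | zero =>
    have hx0 : x = 0 := by omega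
    have hy0 : y = 0 := by omega
    subst hx0; subst hy0
    simp [eta]
  | succ n ih =>
    rw [key x y, Finset.sum_range_succ']
    have hx2 : 0 ≤ x / 2 := by omega
    have hy2 : 0 ≤ y / 2 := by omega
    have hK : (0:ℤ) < 2 ^ n := by positivity
    have hxM2 : x / 2 < 2 ^ n := by
      have : x < 2 * 2 ^ n := by rw [← pow_succ']; exact hxM
      omega
    have hyM2 : y / 2 < 2 ^ n := by
      have : y < 2 * 2 ^ n := by rw [← pow_succ']; exact hyM
      omega
    rw [ih (x / 2) (y / 2) hx2 hy2 hxM2 hyM2]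
    have hterm : ∀ i ∈ Finset.range (n + 1),
        (2:ℤ) ^ (i + 1) * eta (x / 2 ^ (i + 1)) (y / 2 ^ (i + 1))
          = 2 * ((2:ℤ) ^ i * eta ((x / 2) / 2 ^ i) ((y / 2) / 2 ^ i)) := by
      intro i _
      rw [div_pow_succ x hx, div_pow_succ y hy, pow_succ']; ring
    rw [Finset.sum_congr rfl hterm, ← Finset.mul_sum]
    simp only [pow_zero, one_mul]
    simp only [Int.ediv_one]
    ring
end

section
/- For all natural numbers x, y and nonnegative integers a, b, x^a·y^b·[x < y] = 2^{a+b}·⌊x/2⌋^a·⌊y/2⌋^b·[⌊x/2⌋ < ⌊y/2⌋] + x^a·(y-1)^b·[x even ∧ y odd ∧ x = y-1] + (x^a y^b - (x-1)^a y^b)·[x odd ∧ y even ∧ x < y] + (x^a y^b - x^a (y-1)^b)·[x even ∧ y odd ∧ x < y] + (x^a y^b - (x-1)^a (y-1)^b)·[x odd ∧ y odd ∧ x < y]. -/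
set_option maxHeartbeats 2000000 in
theorem mdom_decomposition (x y : ℤ) (hx : 0 ≤ x) (hy : 0 ≤ y) (a b : ℕ) :
    x ^ a * y ^ b * (if x < y then (1 : ℤ) else 0) =
      2 ^ (a + b) * (x / 2) ^ a * (y / 2) ^ b * (if x / 2 < y / 2 then (1 : ℤ) else 0)
      + x ^ a * (y - 1) ^ b * (if Even x ∧ Odd y ∧ x = y - 1 then (1 : ℤ) else 0)
      + (x ^ a * y ^ b - (x - 1) ^ a * y ^ b) * (if Odd x ∧ Even y ∧ x < y then (1 : ℤ) else 0)
      + (x ^ a * y ^ b - x ^ a * (y - 1) ^ b) * (if Even x ∧ Odd y ∧ x < y then (1 : ℤ) else 0)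
      + (x ^ a * y ^ b - (x - 1) ^ a * (y - 1) ^ b) *
          (if Odd x ∧ Odd y ∧ x < y then (1 : ℤ) else 0) := by
  rcases Int.even_or_odd x with ⟨p, hp⟩ | ⟨p, hp⟩ <;>
    rcases Int.even_or_odd y with ⟨q, hq⟩ | ⟨q, hq⟩ <;>
    subst hp hq <;>
  · have h1 : ∀ r : ℤ, (r + r) / 2 = r := fun r => by omega
    have h2 : ∀ r : ℤ, (2 * r + 1) / 2 = r := fun r => by omega
    simp only [h1, h2, Int.even_iff, Int.odd_iff, pow_add]
    split_ifs <;> first | (exfalso; omega) | ring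
end
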